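/- For every r ∈ (0,1) and every real s ≥ 0: s^r = (r/Γ(1−r)) · ∫₀^∞ (1 − e^{−u·s})·u^{−1−r} du. -/

import Mathlib

open Real MeasureTheory

theorem stmt11 (r : ℝ) (hr : r ∈ Set.Ioo (0 : ℝ) 1) (s : ℝ) (hs : 0 ≤ s) :
    s ^ r = (r / Real.Gamma (1 - r)) *
      ∫ u in Set.Ioi (0 : ℝ), (1 - Real.exp (-(u * s))) * u ^ (-1 - r) := by
  obtain ⟨hr0, hr1⟩ := hr
  rcases eq_or_lt_of_le hs with h0 | hs'
  · rw [← h0]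
    simp [Real.zero_rpow hr0.ne']
  have hΓ : 0 < Real.Gamma (1 - r) := Real.Gamma_pos_of_pos (by linarith)
  have hexp_le : ∀ t : ℝ, 1 - Real.exp (-t) ≤ t := fun t => by
    have := Real.add_one_le_exp (-t); linarith
  have hexp_nonneg : ∀ x : ℝ, 0 ≤ x → 0 ≤ 1 - Real.exp (-(x * s)) := by
    intro x hx
    have : Real.exp (-(x * s)) ≤ 1 := by
      rw [Real.exp_le_one_iff]; nlinarith
    linarith
  set u : ℝ → ℝ := fun x => 1 - Real.exp (-(x * s)) with hu_def
  set u' : ℝ → ℝ := fun x => s * Real.exp (-(x * s)) with hu'_def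
  set v : ℝ → ℝ := fun x => -(x ^ (-r)) / r with hv_def
  set v' : ℝ → ℝ := fun x => x ^ (-1 - r) with hv'_def
  have hu : ∀ x ∈ Set.Ioi (0:ℝ), HasDerivAt u (u' x) x := by
    intro x _
    have h1 : HasDerivAt (fun y : ℝ => -(y * s)) (-s) x := by
      simpa [Pi.neg_def] using ((hasDerivAt_id x).mul_const s).neg
    have h2 := (Real.hasDerivAt_exp (-(x * s))).comp x h1
    have h3 := (hasDerivAt_const x (1:ℝ)).sub h2
    simpa [hu_def, hu'_def, mul_comm, Pi.sub_def, Function.comp_def] using h3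
  have hv : ∀ x ∈ Set.Ioi (0:ℝ), HasDerivAt v (v' x) x := by
    intro x hx
    have hx0 : (x : ℝ) ≠ 0 := ne_of_gt hx
    have h1 : HasDerivAt (fun y : ℝ => y ^ (-r)) (-r * x ^ (-r - 1)) x :=
      Real.hasDerivAt_rpow_const (Or.inl hx0)
    have h2 := h1.neg.div_const r
    have he : -(-r * x ^ (-r - 1)) / r = x ^ (-1 - r) := by
      rw [show (-1:ℝ) - r = -r - 1 by ring]
      field_simp
    rw [he] at h2
    rw [hv_def, hv'_def]
    exact h2
  -- integrability of u' * v
  have hInt_exp : IntegrableOn (fun x : ℝ => x ^ (-r) * Real.exp (-(s * x)))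
      (Set.Ioi 0) := by
    have h := integrableOn_rpow_mul_exp_neg_mul_rpow (p := 1) (s := -r) (b := s)
      (by linarith) one_pos hs'
    refine h.congr_fun (fun x hx => ?_) measurableSet_Ioi
    beta_reduce
    rw [Real.rpow_one, neg_mul]
  have hu'v : IntegrableOn (u' * v) (Set.Ioi 0) := by
    have h : IntegrableOn (fun x : ℝ => (-(s / r)) * (x ^ (-r) * Real.exp (-(s * x))))
        (Set.Ioi 0) := hInt_exp.const_mul _
    refine h.congr_fun (fun x hx => ?_) measurableSet_Ioi
    simp only [hu'_def, hv_def, Pi.mul_apply]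
    rw [mul_comm s x]
    ring
  -- integrability of u * v'
  have huv'_meas : AEStronglyMeasurable (u * v')
      (volume.restrict (Set.Ioi (0:ℝ))) := by
    apply AEStronglyMeasurable.mul
    · exact (Continuous.aestronglyMeasurable (by fun_prop)).restrict
    · refine ContinuousOn.aestronglyMeasurable ?_ measurableSet_Ioi
      exact fun x hx =>
        (Real.continuousAt_rpow_const x _ (Or.inl (ne_of_gt hx))).continuousWithinAt
  have habs : ∀ x : ℝ, 0 < x → ‖u x * v' x‖ = (1 - Real.exp (-(x*s))) * x ^ (-1-r) := by
    intro x hx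
    rw [Real.norm_eq_abs, abs_mul, abs_of_nonneg (hexp_nonneg x hx.le),
      abs_of_nonneg (Real.rpow_nonneg hx.le _)]
  have huv'1 : IntegrableOn (u * v') (Set.Ioc 0 1) := by
    have hbound : IntegrableOn (fun x : ℝ => s * x ^ (-r)) (Set.Ioc 0 1) := by
      have h := intervalIntegral.intervalIntegrable_rpow' (r := -r) (a := (0:ℝ))
        (b := 1) (by linarith)
      exact ((intervalIntegrable_iff_integrableOn_Ioc_of_le (by norm_num)).1 h).const_mul s
    refine hbound.integrable.mono' (huv'_meas.mono_measure
      (Measure.restrict_mono Set.Ioc_subset_Ioi_self le_rfl)) ?_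
    filter_upwards [ae_restrict_mem measurableSet_Ioc] with x hx
    obtain ⟨hx0, hx1⟩ := hx
    rw [Pi.mul_apply, habs x hx0]
    calc (1 - Real.exp (-(x*s))) * x ^ (-1-r)
        ≤ (x * s) * x ^ (-1-r) := by
          apply mul_le_mul_of_nonneg_right (hexp_le _) (Real.rpow_nonneg hx0.le _)
      _ = s * (x ^ (1:ℝ) * x ^ (-1-r)) := by rw [Real.rpow_one]; ring
      _ = s * x ^ (-r) := by
          rw [← Real.rpow_add hx0, show (1:ℝ) + (-1 - r) = -r by ring]
  have huv'2 : IntegrableOn (u * v') (Set.Ioi 1) := by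
    have hbound : IntegrableOn (fun x : ℝ => x ^ (-1-r)) (Set.Ioi 1) :=
      integrableOn_Ioi_rpow_of_lt (by linarith) one_pos
    refine hbound.integrable.mono' (huv'_meas.mono_measure
      (Measure.restrict_mono (Set.Ioi_subset_Ioi zero_le_one) le_rfl)) ?_
    filter_upwards [ae_restrict_mem measurableSet_Ioi] with x hx
    have hx0 : (0:ℝ) < x := lt_trans one_pos hx
    rw [Pi.mul_apply, habs x hx0]
    have h1 : 1 - Real.exp (-(x*s)) ≤ 1 := by
      have := Real.exp_pos (-(x*s)); linarith
    nlinarith [Real.rpow_nonneg hx0.le (-1-r), hexp_nonneg x hx0.le]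
  have huv' : IntegrableOn (u * v') (Set.Ioi 0) := by
    rw [← Set.Ioc_union_Ioi_eq_Ioi (zero_le_one)]
    exact huv'1.union huv'2
  -- limit at 0
  have h_zero : Filter.Tendsto (u * v) (nhdsWithin 0 (Set.Ioi 0)) (nhds 0) := by
    have hup : Filter.Tendsto (fun x : ℝ => (s / r) * x ^ (1 - r))
        (nhdsWithin 0 (Set.Ioi 0)) (nhds 0) := by
      have hc : Filter.Tendsto (fun x : ℝ => x ^ (1 - r))
          (nhdsWithin 0 (Set.Ioi 0)) (nhds ((0:ℝ) ^ (1 - r))) :=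
        ((Real.continuousAt_rpow_const 0 (1-r) (Or.inr (by linarith))).continuousWithinAt)
      rw [Real.zero_rpow (by linarith : (1:ℝ) - r ≠ 0)] at hc
      simpa using hc.const_mul (s / r)
    have hlow : Filter.Tendsto (fun x : ℝ => -((s / r) * x ^ (1 - r)))
        (nhdsWithin 0 (Set.Ioi 0)) (nhds 0) := by simpa using hup.neg
    refine tendsto_of_tendsto_of_tendsto_of_le_of_le' hlow tendsto_const_nhds ?_ ?_
    · filter_upwards [self_mem_nhdsWithin] with x hx
      have hx : (0:ℝ) < x := hx
      simp only [Pi.mul_apply, hu_def, hv_def]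
      have key : (1 - Real.exp (-(x*s))) * (x ^ (-r) / r) ≤ (s / r) * x ^ (1 - r) := by
        have h1 : (1 - Real.exp (-(x*s))) * (x ^ (-r) / r) ≤ (x*s) * (x ^ (-r) / r) := by
          apply mul_le_mul_of_nonneg_right (hexp_le _)
          positivity
        refine h1.trans_eq ?_
        rw [show x ^ (1-r) = x ^ (1:ℝ) * x ^ (-r) by
          rw [← Real.rpow_add hx, show (1:ℝ) + -r = 1 - r by ring], Real.rpow_one]
        field_simp
      have : (1 - Real.exp (-(x * s))) * (-(x ^ (-r)) / r)
          = -((1 - Real.exp (-(x*s))) * (x ^ (-r) / r)) := by ring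
      rw [this]
      linarith
    · filter_upwards [self_mem_nhdsWithin] with x hx
      have hx : (0:ℝ) < x := hx
      simp only [Pi.mul_apply, hu_def, hv_def]
      have h1 : 0 ≤ (1 - Real.exp (-(x*s))) * (x ^ (-r) / r) := by
        have := hexp_nonneg x hx.le
        have := Real.rpow_nonneg hx.le (-r)
        positivity
      have heq : (1 - Real.exp (-(x*s))) * (-x ^ (-r) / r)
          = -((1 - Real.exp (-(x*s))) * (x ^ (-r) / r)) := by ring
      rw [heq]
      linarith
  -- limit at infinity
  have h_infty : Filter.Tendsto (u * v) Filter.atTop (nhds 0) := by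
    have h1 : Filter.Tendsto u Filter.atTop (nhds 1) := by
      have ha : Filter.Tendsto (fun x : ℝ => -(x * s)) Filter.atTop Filter.atBot := by
        apply Filter.tendsto_neg_atBot_iff.mpr
        exact Filter.Tendsto.atTop_mul_const hs' Filter.tendsto_id
      have := Real.tendsto_exp_atBot.comp ha
      simpa [hu_def] using (tendsto_const_nhds (x := (1:ℝ))).sub this
    have h2 : Filter.Tendsto v Filter.atTop (nhds 0) := by
      have := (tendsto_rpow_neg_atTop hr0).neg.div_const r
      simpa [hv_def] using this
    have := h1.mul h2
    simpa [Pi.mul_def] using this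
  have key := integral_Ioi_mul_deriv_eq_deriv_mul hu hv huv' hu'v h_zero h_infty
  -- compute ∫ u' * v
  have hval : ∫ x in Set.Ioi (0:ℝ), u' x * v x
      = -(s / r) * ((1 / s) ^ (1 - r) * Real.Gamma (1 - r)) := by
    have hcongr : ∫ x in Set.Ioi (0:ℝ), u' x * v x
        = ∫ x in Set.Ioi (0:ℝ), (-(s / r)) * (x ^ ((1 - r) - 1) * Real.exp (-(s * x))) := by
      refine setIntegral_congr_fun measurableSet_Ioi (fun x hx => ?_)
      simp only [hu'_def, hv_def]
      rw [show (1 - r) - 1 = -r by ring, mul_comm s x]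
      ring
    rw [hcongr, integral_const_mul, integral_rpow_mul_exp_neg_mul_Ioi (by linarith) hs']
  rw [key, hval]
  have hpow : (1 / s) ^ (1 - r) = s ^ (r - 1) := by
    rw [one_div, ← Real.rpow_neg_one s, ← Real.rpow_mul hs]
    congr 1
    ring
  rw [hpow]
  have hsr : s * s ^ (r - 1) = s ^ r := by
    nth_rewrite 1 [← Real.rpow_one s]
    rw [← Real.rpow_add hs']
    norm_num
  rw [← hsr]
  field_simp
  ring
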